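/- Let a > 0 and p, x be real numbers, and set m = a(-|p| + |x - p|) and n = a(|p| + |x - p|). Assume m < 0. On a probability space, let A and C be independent real random variables, A uniformly distributed on [-a, a] and C uniformly distributed on [0, 2], and set X' = p + A·|C·p - x|. Then the function g : ℝ → ℝ defined by g(u) = (1/(n - m))·log(√(-m·n)/|u - p|) when 0 < |u - p| < -m, g(u) = (1/(2(n - m)))·log(n/|u - p|) when -m ≤ |u - p| < n, and g(u) = 0 when |u - p| ≥ n (with g(p) defined arbitrarily, e.g. 0), is a probability density function of X' with respect to Lebesgue measure; that is, the law of X' equals the measure with density g with respect to Lebesgue measure. -/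

import Mathlib

open MeasureTheory ProbabilityTheory Set intervalIntegral
open scoped ENNReal

section auxGWO

lemma aux_int (t c : ℝ) (ht : 0 < t) (ht2 : t < 2) (hc : 0 < c) :
    ∫ γ in (0:ℝ)..2, (Set.Iic (t - c)).indicator (fun γ => (t - γ)⁻¹) γ
      = if c < t then Real.log (t / c) else 0 := by
  by_cases hct : c < t
  · rw [if_pos hct]
    have h1 : (0:ℝ) ≤ t - c := by linarith
    have h2 : t - c ≤ 2 := by linarith
    have : ∫ γ in (0:ℝ)..2, (Set.Iic (t - c)).indicator (fun γ => (t - γ)⁻¹) γ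
        = ∫ γ in (0:ℝ)..(t - c), (t - γ)⁻¹ := by
      have := intervalIntegral.integral_indicator (μ := volume)
        (f := fun γ => (t - γ)⁻¹) (a₁ := (0:ℝ)) (a₂ := t - c) (a₃ := 2) ⟨h1, h2⟩
      simpa [Set.Iic] using this
    rw [this]
    have : ∫ γ in (0:ℝ)..(t - c), (t - γ)⁻¹ = ∫ s in (t - (t - c))..(t - 0), s⁻¹ :=
      intervalIntegral.integral_comp_sub_left (fun s => s⁻¹) t
    rw [this]
    simp only [sub_sub_cancel, sub_zero]
    exact integral_inv (by
      intro h
      rcases h with ⟨h1, h2⟩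
      simp only [inf_le_iff, le_inf_iff] at *
      rcases h1 with h | h <;> nlinarith)
  · rw [if_neg hct]
    push_neg at hct
    have h0 : t - c ≤ 0 := by linarith
    rw [intervalIntegral.integral_of_le (by norm_num : (0:ℝ) ≤ 2),
      MeasureTheory.setIntegral_indicator measurableSet_Iic]
    have : Set.Ioc (0:ℝ) 2 ∩ Set.Iic (t - c) = ∅ := by
      ext γ; simp only [Set.mem_inter_iff, Set.mem_Ioc, Set.mem_Iic, Set.mem_empty_iff_false,
        iff_false, not_and]
      intro h _; linarith [h.1]
    rw [this]; simp

lemma aux_int2 (t c : ℝ) (ht : 0 < t) (ht2 : t < 2) (hc : 0 < c) :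
    ∫ γ in (0:ℝ)..2, (Set.Ici (t + c)).indicator (fun γ => (γ - t)⁻¹) γ
      = if c < 2 - t then Real.log ((2 - t) / c) else 0 := by
  have refl : ∫ γ in (0:ℝ)..2, (Set.Ici (t + c)).indicator (fun γ => (γ - t)⁻¹) γ
      = ∫ γ in (0:ℝ)..2, (Set.Iic ((2 - t) - c)).indicator (fun γ => ((2 - t) - γ)⁻¹) γ := by
    have := intervalIntegral.integral_comp_sub_left
      (fun γ => (Set.Ici (t + c)).indicator (fun γ => (γ - t)⁻¹) γ) 2 (a := 0) (b := 2)
    rw [show (2:ℝ) - 2 = 0 by norm_num, show (2:ℝ) - 0 = 2 by norm_num] at this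
    rw [← this]
    congr 1
    funext γ
    simp only [Set.indicator_apply, Set.mem_Ici, Set.mem_Iic]
    by_cases h : γ ≤ (2 - t) - c
    · rw [if_pos (by linarith), if_pos h]
      ring_nf
    · rw [if_neg (by push_neg at h ⊢; linarith), if_neg h]
  rw [refl]
  exact aux_int (2 - t) c (by linarith) (by linarith) hc

lemma aux_phi_decomp (t c : ℝ) (hc : 0 < c) (γ : ℝ) :
    (if c ≤ |γ - t| then |γ - t|⁻¹ else 0)
      = (Set.Iic (t - c)).indicator (fun γ => (t - γ)⁻¹) γ
        + (Set.Ici (t + c)).indicator (fun γ => (γ - t)⁻¹) γ := by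
  simp only [Set.indicator_apply, Set.mem_Iic, Set.mem_Ici]
  rcases le_total γ t with h | h
  · rw [abs_of_nonpos (by linarith)]
    by_cases h1 : c ≤ t - γ
    · rw [if_pos (by linarith), if_pos (by linarith), if_neg (by intro hx; linarith)]
      rw [neg_sub]; ring
    · rw [if_neg (by intro hx; linarith [neg_sub γ t ▸ hx]),
        if_neg (by intro hx; linarith), if_neg (by intro hx; linarith)]
      simp
  · rw [abs_of_nonneg (by linarith)]
    by_cases h1 : c ≤ γ - t
    · rw [if_pos h1, if_neg (by intro hx; linarith), if_pos (by linarith)]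
      ring
    · rw [if_neg h1, if_neg (by intro hx; linarith), if_neg (by intro hx; linarith)]
      simp

lemma aux_meas1 (t c : ℝ) : Measurable fun γ : ℝ => (Set.Iic (t - c)).indicator (fun γ => (t - γ)⁻¹) γ :=
  (Measurable.inv (by fun_prop)).indicator measurableSet_Iic

lemma aux_meas2 (t c : ℝ) : Measurable fun γ : ℝ => (Set.Ici (t + c)).indicator (fun γ => (γ - t)⁻¹) γ :=
  (Measurable.inv (by fun_prop)).indicator measurableSet_Ici

lemma aux_intgr1 (t c : ℝ) (hc : 0 < c) :
    IntegrableOn (fun γ : ℝ => (Set.Iic (t - c)).indicator (fun γ => (t - γ)⁻¹) γ)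
      (Set.Ioc (0:ℝ) 2) volume := by
  apply Measure.integrableOn_of_bounded (M := c⁻¹) (by simp)
    ((aux_meas1 t c).aestronglyMeasurable)
  refine Filter.Eventually.of_forall fun γ => ?_
  by_cases h : γ ∈ Set.Iic (t - c)
  · rw [Set.indicator_of_mem h]
    rw [Set.mem_Iic] at h
    have h1 : c ≤ t - γ := by linarith
    have h2 : (0:ℝ) < t - γ := lt_of_lt_of_le hc h1
    rw [Real.norm_eq_abs, abs_of_nonneg (le_of_lt (inv_pos.2 h2))]
    exact inv_anti₀ hc h1
  · rw [Set.indicator_of_notMem h]; simp [le_of_lt (inv_pos.2 hc)]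

lemma aux_intgr2 (t c : ℝ) (hc : 0 < c) :
    IntegrableOn (fun γ : ℝ => (Set.Ici (t + c)).indicator (fun γ => (γ - t)⁻¹) γ)
      (Set.Ioc (0:ℝ) 2) volume := by
  apply Measure.integrableOn_of_bounded (M := c⁻¹) (by simp)
    ((aux_meas2 t c).aestronglyMeasurable)
  refine Filter.Eventually.of_forall fun γ => ?_
  by_cases h : γ ∈ Set.Ici (t + c)
  · rw [Set.indicator_of_mem h]
    rw [Set.mem_Ici] at h
    have h1 : c ≤ γ - t := by linarith
    have h2 : (0:ℝ) < γ - t := lt_of_lt_of_le hc h1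
    rw [Real.norm_eq_abs, abs_of_nonneg (le_of_lt (inv_pos.2 h2))]
    exact inv_anti₀ hc h1
  · rw [Set.indicator_of_notMem h]; simp [le_of_lt (inv_pos.2 hc)]

lemma aux_J (t c : ℝ) (ht : 0 < t) (ht2 : t < 2) (hc : 0 < c) :
    ∫ γ in Set.Ioc (0:ℝ) 2, (if c ≤ |γ - t| then |γ - t|⁻¹ else 0)
      = (if c < t then Real.log (t / c) else 0)
        + (if c < 2 - t then Real.log ((2 - t) / c) else 0) := by
  rw [← intervalIntegral.integral_of_le (by norm_num : (0:ℝ) ≤ 2)]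
  have hdec : (fun γ : ℝ => if c ≤ |γ - t| then |γ - t|⁻¹ else 0)
      = fun γ => (Set.Iic (t - c)).indicator (fun γ => (t - γ)⁻¹) γ
        + (Set.Ici (t + c)).indicator (fun γ => (γ - t)⁻¹) γ := by
    funext γ; exact aux_phi_decomp t c hc γ
  rw [hdec]
  rw [intervalIntegral.integral_add
    ((intervalIntegrable_iff_integrableOn_Ioc_of_le (by norm_num : (0:ℝ) ≤ 2)).2 (aux_intgr1 t c hc))
    ((intervalIntegrable_iff_integrableOn_Ioc_of_le (by norm_num : (0:ℝ) ≤ 2)).2 (aux_intgr2 t c hc))]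
  rw [aux_int t c ht ht2 hc, aux_int2 t c ht ht2 hc]


lemma aux_psi_integrable (t c : ℝ) (hc : 0 < c) :
    IntegrableOn (fun γ : ℝ => if c ≤ |γ - t| then |γ - t|⁻¹ else 0)
      (Set.Ioc (0:ℝ) 2) volume := by
  have hdec : (fun γ : ℝ => if c ≤ |γ - t| then |γ - t|⁻¹ else 0)
      = fun γ => (Set.Iic (t - c)).indicator (fun γ => (t - γ)⁻¹) γ
        + (Set.Ici (t + c)).indicator (fun γ => (γ - t)⁻¹) γ := by
    funext γ; exact aux_phi_decomp t c hc γ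
  rw [hdec]
  exact (aux_intgr1 t c hc).add (aux_intgr2 t c hc)

lemma aux_E (p x t a r : ℝ) (hp : 0 < |p|) (hx : x = t * p) (ht0 : 0 < t) (ht2 : t < 2)
    (ha : 0 < a) (hr : 0 < r) :
    ∫⁻ γ in Set.Icc (0:ℝ) 2,
        ENNReal.ofReal (|γ * p - x|⁻¹) * (if r ≤ a * |γ * p - x| then (1:ℝ≥0∞) else 0)
      = ENNReal.ofReal (|p|⁻¹ *
          ((if r / (a * |p|) < t then Real.log (t / (r / (a * |p|))) else 0)
            + (if r / (a * |p|) < 2 - t then Real.log ((2 - t) / (r / (a * |p|))) else 0))) := by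
  set c : ℝ := r / (a * |p|) with hc_def
  have hap : 0 < a * |p| := mul_pos ha hp
  have hc : 0 < c := div_pos hr hap
  have hw : ∀ γ : ℝ, |γ * p - x| = |p| * |γ - t| := by
    intro γ
    rw [hx, show γ * p - t * p = (γ - t) * p by ring, abs_mul, mul_comm]
  have hpt : ∀ γ : ℝ,
      ENNReal.ofReal (|γ * p - x|⁻¹) * (if r ≤ a * |γ * p - x| then (1:ℝ≥0∞) else 0)
        = ENNReal.ofReal (|p|⁻¹ * (if c ≤ |γ - t| then |γ - t|⁻¹ else 0)) := by
    intro γ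
    rw [hw γ]
    have hiff : r ≤ a * (|p| * |γ - t|) ↔ c ≤ |γ - t| := by
      rw [hc_def, div_le_iff₀ hap]
      constructor <;> intro h <;> nlinarith
    by_cases h : c ≤ |γ - t|
    · rw [if_pos (hiff.2 h), if_pos h, mul_one, mul_inv]
    · rw [if_neg (fun hh => h (hiff.1 hh)), if_neg h, mul_zero, mul_zero,
        ENNReal.ofReal_zero]
  simp_rw [hpt]
  rw [Measure.restrict_congr_set Ioc_ae_eq_Icc.symm]  -- wrong direction? fix below
  have hint : IntegrableOn (fun γ : ℝ => |p|⁻¹ * (if c ≤ |γ - t| then |γ - t|⁻¹ else 0))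
      (Set.Ioc (0:ℝ) 2) volume := (aux_psi_integrable t c hc).const_mul _
  have hnn : 0 ≤ᵐ[volume.restrict (Set.Ioc (0:ℝ) 2)]
      (fun γ : ℝ => |p|⁻¹ * (if c ≤ |γ - t| then |γ - t|⁻¹ else 0)) := by
    refine Filter.Eventually.of_forall fun γ => ?_
    simp only [Pi.zero_apply]
    by_cases h : c ≤ |γ - t|
    · rw [if_pos h]; positivity
    · rw [if_neg h]; simp
  rw [← MeasureTheory.ofReal_integral_eq_lintegral_ofReal hint hnn]
  congr 1
  rw [MeasureTheory.integral_const_mul, aux_J t c ht0 ht2 hc]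

lemma aux_alg (a p x m n t u : ℝ) (ha : 0 < a) (hp : 0 < |p|) (hx : x = t * p)
    (hm : m = a * (-|p| + |x - p|)) (hn : n = a * (|p| + |x - p|))
    (ht0 : 0 < t) (ht2 : t < 2) (hu : u ≠ p)
    (g : ℝ → ℝ)
    (hg₁ : ∀ u : ℝ, 0 < |u - p| → |u - p| < -m →
      g u = (1 / (n - m)) * Real.log (Real.sqrt (-m * n) / |u - p|))
    (hg₂ : ∀ u : ℝ, -m ≤ |u - p| → |u - p| < n →
      g u = (1 / (2 * (n - m))) * Real.log (n / |u - p|))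
    (hg₃ : ∀ u : ℝ, n ≤ |u - p| → g u = 0) :
    2⁻¹ * ((2 * a)⁻¹ * (|p|⁻¹ *
      ((if |u - p| / (a * |p|) < t then Real.log (t / (|u - p| / (a * |p|))) else 0)
        + (if |u - p| / (a * |p|) < 2 - t then Real.log ((2 - t) / (|u - p| / (a * |p|))) else 0))))
      = g u := by
  set r := |u - p| with hr_def
  have hr : 0 < r := abs_pos.2 (sub_ne_zero.2 hu)
  have hap : 0 < a * |p| := mul_pos ha hp
  set c := r / (a * |p|) with hc_def
  have hc : 0 < c := div_pos hr hap
  have hd : |x - p| = |p| * |t - 1| := by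
    rw [hx, show t * p - p = (t - 1) * p by ring, abs_mul, mul_comm]
  have hrc : r = (a * |p|) * c := by rw [hc_def, mul_div_assoc']; exact (mul_div_cancel_left₀ r (ne_of_gt hap)).symm
  have hmm : -m = (a * |p|) * (1 - |t - 1|) := by rw [hm, hd]; ring
  have hnn : n = (a * |p|) * (1 + |t - 1|) := by rw [hn, hd]; ring
  have hnm : n - m = 2 * (a * |p|) := by rw [hm, hn]; ring
  have habs1 : 1 - |t - 1| ≤ t := by rcases abs_cases (t - 1) with ⟨h1, h2⟩ | ⟨h1, h2⟩ <;> linarith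
  have habs2 : 1 - |t - 1| ≤ 2 - t := by rcases abs_cases (t - 1) with ⟨h1, h2⟩ | ⟨h1, h2⟩ <;> linarith
  have habs3 : t ≤ 1 + |t - 1| := by rcases abs_cases (t - 1) with ⟨h1, h2⟩ | ⟨h1, h2⟩ <;> linarith
  have habs4 : 2 - t ≤ 1 + |t - 1| := by rcases abs_cases (t - 1) with ⟨h1, h2⟩ | ⟨h1, h2⟩ <;> linarith
  have h2t : 0 < 2 - t := by linarith
  rcases lt_or_ge r (-m) with h1 | h1
  · have hcm : c < 1 - |t - 1| := by
      rw [hc_def, div_lt_iff₀ hap]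
      nlinarith [hmm]
    have hct : c < t := lt_of_lt_of_le hcm habs1
    have hct2 : c < 2 - t := lt_of_lt_of_le hcm habs2
    rw [if_pos hct, if_pos hct2, hg₁ u hr h1]
    have hd2 : |x - p| ^ 2 = |p| ^ 2 * (t - 1) ^ 2 := by rw [hd, mul_pow, sq_abs, sq_abs]
    have hkey : -m * n = (a * |p|) ^ 2 * (t * (2 - t)) := by
      rw [hm, hn]; linear_combination (-(a ^ 2)) * hd2
    have hsq : Real.sqrt (-m * n) = (a * |p|) * Real.sqrt (t * (2 - t)) := by
      rw [hkey, Real.sqrt_mul (by positivity), Real.sqrt_sq (le_of_lt hap)]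
    have hdiv : Real.sqrt (-m * n) / r = Real.sqrt (t * (2 - t)) / c := by
      rw [hsq, hrc, mul_div_mul_left _ _ (ne_of_gt hap)]
    rw [hdiv, hnm]
    have hsp : 0 < t * (2 - t) := by positivity
    rw [Real.log_div (ne_of_gt (Real.sqrt_pos.2 hsp)) (ne_of_gt hc),
      Real.log_sqrt (le_of_lt hsp), Real.log_mul (ne_of_gt ht0) (ne_of_gt h2t),
      Real.log_div (ne_of_gt ht0) (ne_of_gt hc),
      Real.log_div (ne_of_gt h2t) (ne_of_gt hc)]
    field_simp
    ring
  · rcases lt_or_ge r n with h2 | h2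
    · rw [hg₂ u h1 h2, hnm]
      rcases le_or_gt t 1 with htl | htl
      · have habs : |t - 1| = 1 - t := by rw [abs_of_nonpos (by linarith)]; ring
        have hct : ¬ (c < t) := by
          push_neg
          rw [hc_def, le_div_iff₀ hap]
          nlinarith [hmm, habs]
        have hct2 : c < 2 - t := by
          rw [hc_def, div_lt_iff₀ hap]
          nlinarith [hnn, habs]
        have hnr : n / r = (2 - t) / c := by
          rw [hnn, habs, hrc, show (a * |p|) * (1 + (1 - t)) = (a * |p|) * (2 - t) by ring,
            mul_div_mul_left _ _ (ne_of_gt hap)]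
        rw [if_neg hct, if_pos hct2, hnr]
        ring
      · have habs : |t - 1| = t - 1 := by rw [abs_of_nonneg (by linarith)]
        have hct2 : ¬ (c < 2 - t) := by
          push_neg
          rw [hc_def, le_div_iff₀ hap]
          nlinarith [hmm, habs]
        have hct : c < t := by
          rw [hc_def, div_lt_iff₀ hap]
          nlinarith [hnn, habs]
        have hnr : n / r = t / c := by
          rw [hnn, habs, hrc, show (a * |p|) * (1 + (t - 1)) = (a * |p|) * t by ring,
            mul_div_mul_left _ _ (ne_of_gt hap)]
        rw [if_neg hct2, if_pos hct, hnr]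
        ring
    · rw [hg₃ u h2]
      have hct : ¬ (c < t) := by
        push_neg
        rw [hc_def, le_div_iff₀ hap]
        nlinarith [hnn]
      have hct2 : ¬ (c < 2 - t) := by
        push_neg
        rw [hc_def, le_div_iff₀ hap]
        nlinarith [hnn]
      rw [if_neg hct, if_neg hct2]
      ring

end auxGWO

/-- Proposition 1.2 of the paper, case `m < 0`: the exact density of the
intermediate GWO solution `X' = p + A * |C * p - x|` where `A ~ U[-a, a]` and
`C ~ U[0, 2]` are independent. -/
theorem gwo_intermediate_density_m_neg
    {Ω : Type*} [MeasurableSpace Ω] (P : Measure Ω) [IsProbabilityMeasure P]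
    (a p x : ℝ) (ha : 0 < a)
    (m n : ℝ) (hm : m = a * (-|p| + |x - p|)) (hn : n = a * (|p| + |x - p|))
    (hmneg : m < 0)
    (A C : Ω → ℝ) (hAmeas : Measurable A) (hCmeas : Measurable C)
    (hAlaw : Measure.map A P
      = (volume (Icc (-a) a))⁻¹ • volume.restrict (Icc (-a) a))
    (hClaw : Measure.map C P
      = (volume (Icc (0:ℝ) 2))⁻¹ • volume.restrict (Icc (0:ℝ) 2))
    (hindep : IndepFun A C P)
    (g : ℝ → ℝ)
    (hg₁ : ∀ u : ℝ, 0 < |u - p| → |u - p| < -m →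
      g u = (1 / (n - m)) * Real.log (Real.sqrt (-m * n) / |u - p|))
    (hg₂ : ∀ u : ℝ, -m ≤ |u - p| → |u - p| < n →
      g u = (1 / (2 * (n - m))) * Real.log (n / |u - p|))
    (hg₃ : ∀ u : ℝ, n ≤ |u - p| → g u = 0)
    (hgp : g p = 0) :
    Measure.map (fun ω => p + A ω * |C ω * p - x|) P
      = volume.withDensity (fun u => ENNReal.ofReal (g u)) := by
  -- basic real facts
  have hdp : |x - p| < |p| := by nlinarith [hm ▸ hmneg]
  have hp0 : (0:ℝ) < |p| := lt_of_le_of_lt (abs_nonneg _) hdp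
  have hpne : p ≠ 0 := abs_pos.1 hp0
  set t : ℝ := x / p with ht_def
  have hx : x = t * p := by rw [ht_def]; exact (div_mul_cancel₀ x hpne).symm
  have htd : |t - 1| < 1 := by
    have h1 : |x - p| = |t - 1| * |p| := by
      rw [hx, show t * p - p = (t - 1) * p by ring, abs_mul]
    have h2 : |t - 1| * |p| < 1 * |p| := by rw [← h1, one_mul]; exact hdp
    exact lt_of_mul_lt_mul_right h2 hp0.le
  have ht0 : 0 < t := by rcases abs_cases (t - 1) with ⟨h1, h2⟩ | ⟨h1, h2⟩ <;> linarith
  have ht2 : t < 2 := by rcases abs_cases (t - 1) with ⟨h1, h2⟩ | ⟨h1, h2⟩ <;> linarith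
  -- measurability
  have hf : Measurable (fun z : ℝ × ℝ => p + z.1 * |z.2 * p - x|) :=
    measurable_const.add (measurable_fst.mul
      (((measurable_snd.mul_const p).sub_const x).abs))
  have hwmeas : Measurable (fun γ : ℝ => |γ * p - x|) :=
    ((measurable_id.mul_const p).sub_const x).abs
  -- joint law
  have hprod : Measure.map (fun ω => (A ω, C ω)) P
      = (Measure.map A P).prod (Measure.map C P) :=
    (indepFun_iff_map_prod_eq_prod_map_map hAmeas.aemeasurable hCmeas.aemeasurable).1 hindep
  haveI : IsProbabilityMeasure (Measure.map A P) :=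
    Measure.isProbabilityMeasure_map hAmeas.aemeasurable
  haveI : IsProbabilityMeasure (Measure.map C P) :=
    Measure.isProbabilityMeasure_map hCmeas.aemeasurable
  have hcomp : Measure.map (fun ω => p + A ω * |C ω * p - x|) P
      = Measure.map (fun z : ℝ × ℝ => p + z.1 * |z.2 * p - x|)
          ((Measure.map A P).prod (Measure.map C P)) := by
    rw [← hprod, Measure.map_map hf (hAmeas.prodMk hCmeas)]
    rfl
  set c₁ : ℝ≥0∞ := (volume (Icc (-a) a))⁻¹ with hc₁_def
  set c₂ : ℝ≥0∞ := (volume (Icc (0:ℝ) 2))⁻¹ with hc₂_def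
  have hvol1 : volume (Icc (-a) a) = ENNReal.ofReal (2 * a) := by
    rw [Real.volume_Icc]; congr 1; ring
  have hvol2 : volume (Icc (0:ℝ) 2) = ENNReal.ofReal 2 := by
    rw [Real.volume_Icc]; norm_num
  have hc₁ne : c₁ ≠ ⊤ := by
    rw [hc₁_def, hvol1]
    exact ENNReal.inv_ne_top.2 (ne_of_gt (ENNReal.ofReal_pos.2 (by linarith)))
  have hc₂ne : c₂ ≠ ⊤ := by
    rw [hc₂_def, hvol2]
    exact ENNReal.inv_ne_top.2 (ne_of_gt (ENNReal.ofReal_pos.2 (by norm_num)))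
  set Q : ℝ → ℝ → ℝ≥0∞ := fun γ u =>
    ENNReal.ofReal (|γ * p - x|⁻¹) * (if |u - p| ≤ a * |γ * p - x| then (1:ℝ≥0∞) else 0)
    with hQ_def
  set E : ℝ → ℝ≥0∞ := fun u => ∫⁻ γ in Icc (0:ℝ) 2, Q γ u with hE_def
  have hQmeas : Measurable (Function.uncurry Q) := by
    apply Measurable.mul
    · exact ENNReal.measurable_ofReal.comp ((hwmeas.comp measurable_fst).inv)
    · exact Measurable.ite
        (measurableSet_le ((measurable_snd.sub_const p).abs)
          ((hwmeas.comp measurable_fst).const_mul a))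
        measurable_const measurable_const
  -- main computation
  have haffine : ∀ w : ℝ, 0 < w → ∀ S : Set ℝ,
      volume ((fun α : ℝ => p + α * w) ⁻¹' S) = ENNReal.ofReal w⁻¹ * volume S := by
    intro w hw S
    have hco : (fun α : ℝ => p + α * w) = (fun y : ℝ => p + y) ∘ (fun α : ℝ => α * w) := rfl
    rw [hco, Set.preimage_comp, Real.volume_preimage_mul_right (ne_of_gt hw),
      measure_preimage_add volume p S, abs_of_pos (inv_pos.2 hw)]
  have hmain : Measure.map (fun z : ℝ × ℝ => p + z.1 * |z.2 * p - x|)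
      ((Measure.map A P).prod (Measure.map C P))
      = volume.withDensity (fun u => c₂ * (c₁ * E u)) := by
    refine Measure.ext fun s hs => ?_
    rw [Measure.map_apply hf hs, Measure.prod_apply_symm (hf hs), hClaw,
      lintegral_smul_measure]
    have hae : ∀ᵐ γ ∂(volume.restrict (Icc (0:ℝ) 2)), γ ≠ t := by
      refine ae_restrict_of_ae ?_
      rw [ae_iff]
      simp only [ne_eq, not_not, Set.setOf_eq_eq_singleton]
      exact measure_singleton t
    have hstep : (∫⁻ γ, (Measure.map A P) ((fun α => (α, γ)) ⁻¹'
          ((fun z : ℝ × ℝ => p + z.1 * |z.2 * p - x|) ⁻¹' s))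
            ∂(volume.restrict (Icc (0:ℝ) 2)))
        = ∫⁻ γ, (c₁ * ∫⁻ u, s.indicator 1 u * Q γ u)
            ∂(volume.restrict (Icc (0:ℝ) 2)) := by
      refine lintegral_congr_ae (hae.mono fun γ hγ => ?_)
      have hwpos : 0 < |γ * p - x| := by
        have : γ * p - x = (γ - t) * p := by rw [hx]; ring
        rw [this]
        exact abs_pos.2 (mul_ne_zero (sub_ne_zero.2 hγ) hpne)
      have hsm : MeasurableSet ((fun α : ℝ => p + α * |γ * p - x|) ⁻¹' s) :=
        (measurable_const.add (measurable_id.mul_const _)) hs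
      show (Measure.map A P) ((fun α : ℝ => p + α * |γ * p - x|) ⁻¹' s)
          = c₁ * ∫⁻ u, s.indicator 1 u * Q γ u
      rw [hAlaw, Measure.smul_apply, smul_eq_mul, Measure.restrict_apply hsm]
      have hset : (fun α : ℝ => p + α * |γ * p - x|) ⁻¹' s ∩ Icc (-a) a
          = (fun α : ℝ => p + α * |γ * p - x|) ⁻¹'
              (s ∩ Icc (p - a * |γ * p - x|) (p + a * |γ * p - x|)) := by
        rw [Set.preimage_inter]
        congr 1
        ext α
        simp only [Set.mem_preimage, Set.mem_Icc]
        constructor <;> intro h <;> constructor <;> nlinarith [h.1, h.2, hwpos]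
      rw [hset, haffine _ hwpos _,
        ← lintegral_indicator_one (hs.inter measurableSet_Icc)]
      congr 1
      rw [← lintegral_const_mul' _ _ ENNReal.ofReal_ne_top]
      refine lintegral_congr fun u => ?_
      have hii : (s ∩ Icc (p - a * |γ * p - x|) (p + a * |γ * p - x|)).indicator
          (1 : ℝ → ℝ≥0∞) u
          = s.indicator 1 u
            * (Icc (p - a * |γ * p - x|) (p + a * |γ * p - x|)).indicator 1 u := by
        rw [Set.inter_indicator_one]; rfl
      rw [hii]
      have hT : (Icc (p - a * |γ * p - x|) (p + a * |γ * p - x|)).indicator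
          (1 : ℝ → ℝ≥0∞) u = (if |u - p| ≤ a * |γ * p - x| then (1:ℝ≥0∞) else 0) := by
        simp only [Set.indicator_apply, Set.mem_Icc, Pi.one_apply]
        refine if_congr ?_ rfl rfl
        rw [abs_le]
        constructor <;> intro h <;> constructor <;> linarith [h.1, h.2]
      rw [hT, hQ_def]
      ring
    rw [hstep, lintegral_const_mul' c₁ _ hc₁ne]
    have hswap : ∫⁻ γ in Icc (0:ℝ) 2, ∫⁻ u, s.indicator 1 u * Q γ u
        = ∫⁻ u, ∫⁻ γ in Icc (0:ℝ) 2, s.indicator 1 u * Q γ u := by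
      refine lintegral_lintegral_swap ?_
      exact (((measurable_one.indicator hs).comp measurable_snd).mul hQmeas).aemeasurable
    rw [hswap]
    have hinner : ∀ u : ℝ, ∫⁻ γ in Icc (0:ℝ) 2, s.indicator 1 u * Q γ u
        = s.indicator 1 u * E u := by
      intro u
      rw [hE_def]
      exact lintegral_const_mul' _ _ (by by_cases h : u ∈ s <;> simp [h])
    simp_rw [hinner]
    have hindE : ∀ u : ℝ, s.indicator 1 u * E u = s.indicator E u := by
      intro u; by_cases h : u ∈ s <;> simp [h]
    simp_rw [hindE]
    have hEmeas : Measurable E := by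
      rw [hE_def]
      exact Measurable.lintegral_prod_left hQmeas
    rw [lintegral_indicator hs E, withDensity_apply _ hs,
      lintegral_const_mul' c₂ _ hc₂ne, lintegral_const_mul' c₁ _ hc₁ne, smul_eq_mul]
  rw [hcomp, hmain]
  refine withDensity_congr_ae ?_
  have hane : ∀ᵐ u : ℝ ∂volume, u ≠ p := by
    rw [ae_iff]
    simp only [ne_eq, not_not, Set.setOf_eq_eq_singleton]
    exact measure_singleton p
  filter_upwards [hane] with u hu
  have hr : 0 < |u - p| := abs_pos.2 (sub_ne_zero.2 hu)
  have hEu : E u = ENNReal.ofReal (|p|⁻¹ *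
      ((if |u - p| / (a * |p|) < t then Real.log (t / (|u - p| / (a * |p|))) else 0)
        + (if |u - p| / (a * |p|) < 2 - t
            then Real.log ((2 - t) / (|u - p| / (a * |p|))) else 0))) := by
    rw [hE_def]
    exact aux_E p x t a |u - p| hp0 hx ht0 ht2 ha hr
  rw [hEu, hc₁_def, hc₂_def, hvol1, hvol2,
    ← ENNReal.ofReal_inv_of_pos (by norm_num : (0:ℝ) < 2),
    ← ENNReal.ofReal_inv_of_pos (by linarith : (0:ℝ) < 2 * a),
    ← ENNReal.ofReal_mul (by positivity), ← ENNReal.ofReal_mul (by positivity)]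
  congr 1
  exact aux_alg a p x m n t u ha hp0 hx hm hn ht0 ht2 hu g hg₁ hg₂ hg₃
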